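/- For all real parameters λ > 0 with λ ≠ 1 and φ > 0, and every real h > 0 with (φ − 1)·h + 1 > 0, the h-th power integral of the SMPtW density satisfies ∫₀^∞ f(y)^h dy = ((log λ)·φ/(λ − 1))^h · (1/φ) · Γ(((φ − 1)h + 1)/φ) · Σ_{j=0}^∞ (h·log λ)^j / j! · (h + j)^(−((φ − 1)h + 1)/φ), and in particular the integral and series converge. -/

import Mathlib

open Real MeasureTheory

/-- The SMPtW probability density function with parameters `lam > 0`, `lam ≠ 1`, `phi > 0`. -/
noncomputable def smptwPDF (lam phi y : ℝ) : ℝ :=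
  (Real.log lam * phi * y ^ (phi - 1) *
    Real.exp (Real.log lam * Real.exp (-(y ^ phi)) - y ^ phi)) / (lam - 1)

lemma intKey {q p b : ℝ} (hq : -1 < q) (hp : 0 < p) (hb : 0 < b) :
    IntegrableOn (fun x : ℝ => x ^ q * Real.exp (-b * x ^ p)) (Set.Ioi 0) := by
  have hs : 0 < (q + 1) / p := div_pos (by linarith) hp
  have h0 : IntegrableOn (fun t : ℝ => Real.exp (-t) * t ^ ((q + 1) / p - 1)) (Set.Ioi 0) :=
    Real.GammaIntegral_convergent hs
  have h1 : IntegrableOn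
      (fun t : ℝ => Real.exp (-(b * t)) * (b * t) ^ ((q + 1) / p - 1)) (Set.Ioi 0) := by
    have := (integrableOn_Ioi_comp_mul_left_iff
      (fun t : ℝ => Real.exp (-t) * t ^ ((q + 1) / p - 1)) 0 hb).mpr
    simpa using this (by simpa using h0)
  have h2 : IntegrableOn
      (fun t : ℝ => t ^ ((q + 1) / p - 1) * Real.exp (-(b * t))) (Set.Ioi 0) := by
    have h1' : IntegrableOn
        (fun t : ℝ => b ^ (1 - (q + 1) / p) *
          (Real.exp (-(b * t)) * (b * t) ^ ((q + 1) / p - 1))) (Set.Ioi 0) :=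
      h1.const_mul _
    refine h1'.congr_fun (fun t ht => ?_) measurableSet_Ioi
    have ht' : (0 : ℝ) < t := ht
    dsimp only
    rw [Real.mul_rpow hb.le ht'.le,
      show b ^ (1 - (q + 1) / p) * (Real.exp (-(b * t)) *
        (b ^ ((q + 1) / p - 1) * t ^ ((q + 1) / p - 1))) =
        (b ^ (1 - (q + 1) / p) * b ^ ((q + 1) / p - 1)) *
          (Real.exp (-(b * t)) * t ^ ((q + 1) / p - 1)) by ring,
      ← Real.rpow_add hb]
    norm_num
    ring
  have h3 : IntegrableOn (fun x : ℝ => x ^ (p - 1) •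
      ((x ^ p) ^ ((q + 1) / p - 1) * Real.exp (-(b * x ^ p)))) (Set.Ioi 0) :=
    (integrableOn_Ioi_comp_rpow_iff'
      (fun t : ℝ => t ^ ((q + 1) / p - 1) * Real.exp (-(b * t))) hp.ne').mpr h2
  refine h3.congr_fun (fun x hx => ?_) measurableSet_Ioi
  have hx' : (0 : ℝ) < x := hx
  have e1 : (x ^ p) ^ ((q + 1) / p - 1) = x ^ (q + 1 - p) := by
    rw [← Real.rpow_mul hx'.le]
    congr 1
    field_simp
  simp only [smul_eq_mul, e1]
  rw [show x ^ (p - 1) * (x ^ (q + 1 - p) * Real.exp (-(b * x ^ p))) =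
    (x ^ (p - 1) * x ^ (q + 1 - p)) * Real.exp (-(b * x ^ p)) by ring,
    ← Real.rpow_add hx']
  ring_nf

/-- the `h`-th power integral of the SMPtW density (the key ingredient
of the Rényi entropy), with convergence of the integral and of the series. -/
theorem smptw_renyi_power_integral (lam phi h : ℝ)
    (hlam : 0 < lam) (hlam1 : lam ≠ 1) (hphi : 0 < phi)
    (hh : 0 < h) (hexp : 0 < (phi - 1) * h + 1) :
    IntegrableOn (fun y : ℝ => smptwPDF lam phi y ^ h) (Set.Ioi (0 : ℝ)) ∧
    Summable (fun j : ℕ =>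
      (h * Real.log lam) ^ j / (j.factorial : ℝ) *
        (h + (j : ℝ)) ^ (-(((phi - 1) * h + 1) / phi))) ∧
    ∫ y in Set.Ioi (0 : ℝ), smptwPDF lam phi y ^ h =
      (Real.log lam * phi / (lam - 1)) ^ h * (1 / phi) *
        Real.Gamma (((phi - 1) * h + 1) / phi) *
        ∑' j : ℕ, (h * Real.log lam) ^ j / (j.factorial : ℝ) *
          (h + (j : ℝ)) ^ (-(((phi - 1) * h + 1) / phi)) := by
  set C : ℝ := Real.log lam * phi / (lam - 1) with hCdef
  set q : ℝ := (phi - 1) * h with hqdef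
  set s : ℝ := ((phi - 1) * h + 1) / phi with hsdef
  have hq : -1 < q := by rw [hqdef]; linarith
  have hs : 0 < s := div_pos hexp hphi
  have hC : 0 < C := by
    rcases lt_or_gt_of_ne hlam1 with hl | hl
    · have h1 : Real.log lam < 0 := Real.log_neg hlam hl
      have h2 : lam - 1 < 0 := by linarith
      exact div_pos_of_neg_of_neg (mul_neg_of_neg_of_pos h1 hphi) h2
    · exact div_pos (mul_pos (Real.log_pos hl) hphi) (by linarith)
  -- rewrite of the density
  have e0 : ∀ y : ℝ, smptwPDF lam phi y =
      C * (y ^ (phi - 1) * Real.exp (Real.log lam * Real.exp (-(y ^ phi)) - y ^ phi)) := by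
    intro y; rw [smptwPDF, hCdef]; ring
  have hpdfpos : ∀ y : ℝ, 0 < y → 0 < smptwPDF lam phi y := by
    intro y hy; rw [e0]; positivity
  -- pointwise rewrite of the power
  have e1 : ∀ y : ℝ, 0 < y → smptwPDF lam phi y ^ h =
      C ^ h * (y ^ q * Real.exp ((h * Real.log lam) * Real.exp (-(y ^ phi))) *
        Real.exp (-(h * y ^ phi))) := by
    intro y hy
    rw [e0, Real.mul_rpow hC.le (by positivity),
      Real.mul_rpow (Real.rpow_nonneg hy.le _) (Real.exp_pos _).le,
      ← Real.rpow_mul hy.le, Real.rpow_def_of_pos (Real.exp_pos _), Real.log_exp,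
      show (Real.log lam * Real.exp (-(y ^ phi)) - y ^ phi) * h =
        (h * Real.log lam) * Real.exp (-(y ^ phi)) + -(h * y ^ phi) by ring,
      Real.exp_add, hqdef]
    ring
  -- the series expansion of the exp factor
  have e2 : ∀ y : ℝ, Real.exp ((h * Real.log lam) * Real.exp (-(y ^ phi))) =
      ∑' j : ℕ, (h * Real.log lam) ^ j / (j.factorial : ℝ) *
        Real.exp (-(j : ℝ) * y ^ phi) := by
    intro y
    have expser : ∀ x : ℝ, Real.exp x = ∑' n : ℕ, x ^ n / (n.factorial : ℝ) := fun x => by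
      rw [Real.exp_eq_exp_ℝ, NormedSpace.exp_eq_tsum_div]
    rw [expser ((h * Real.log lam) * Real.exp (-(y ^ phi)))]
    refine tsum_congr fun j => ?_
    rw [mul_pow, ← Real.exp_nat_mul, show ((j : ℝ) * -(y ^ phi)) = -(j : ℝ) * y ^ phi by ring]
    ring
  -- the summands
  set F : ℕ → ℝ → ℝ := fun j y =>
    (C ^ h * ((h * Real.log lam) ^ j / (j.factorial : ℝ))) *
      (y ^ q * Real.exp (-(h + (j : ℝ)) * y ^ phi)) with hFdef
  have hpt : ∀ y ∈ Set.Ioi (0 : ℝ),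
      smptwPDF lam phi y ^ h = ∑' j : ℕ, F j y := by
    intro y hy
    have hy' : (0 : ℝ) < y := hy
    rw [e1 y hy', e2 y]
    calc C ^ h * (y ^ q * (∑' j : ℕ, (h * Real.log lam) ^ j / (j.factorial : ℝ) *
            Real.exp (-(j : ℝ) * y ^ phi)) * Real.exp (-(h * y ^ phi)))
        = ∑' j : ℕ, (C ^ h * (y ^ q * Real.exp (-(h * y ^ phi)))) *
            ((h * Real.log lam) ^ j / (j.factorial : ℝ) * Real.exp (-(j : ℝ) * y ^ phi)) := by
          rw [tsum_mul_left]; ring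
      _ = ∑' j : ℕ, F j y := by
          refine tsum_congr fun j => ?_
          simp only [hFdef]
          rw [show -(h + (j : ℝ)) * y ^ phi = -(h * y ^ phi) + (-(j : ℝ) * y ^ phi) by ring,
            Real.exp_add]
          ring
  -- integrability of each summand
  have hFint : ∀ j : ℕ, IntegrableOn (F j) (Set.Ioi (0 : ℝ)) := by
    intro j
    exact (intKey hq hphi (by positivity : (0 : ℝ) < h + (j : ℝ))).const_mul _
  -- value of each integral
  have hFval : ∀ j : ℕ, ∫ y in Set.Ioi (0 : ℝ), F j y =
      (C ^ h * (1 / phi) * Real.Gamma s) *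
        ((h * Real.log lam) ^ j / (j.factorial : ℝ) * (h + (j : ℝ)) ^ (-s)) := by
    intro j
    simp only [hFdef]
    rw [MeasureTheory.integral_const_mul,
      integral_rpow_mul_exp_neg_mul_rpow hphi hq (by positivity : (0 : ℝ) < h + (j : ℝ))]
    rw [show -(q + 1) / phi = -s by rw [hsdef, hqdef, neg_div], show (q + 1) / phi = s by
      rw [hsdef, hqdef]]
    ring
  -- value of the integral of the norm
  have hFnval : ∀ j : ℕ, ∫ y in Set.Ioi (0 : ℝ), ‖F j y‖ =
      (C ^ h * (1 / phi) * Real.Gamma s) *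
        (|h * Real.log lam| ^ j / (j.factorial : ℝ) * (h + (j : ℝ)) ^ (-s)) := by
    intro j
    rw [show (∫ y in Set.Ioi (0 : ℝ), ‖F j y‖) =
        ∫ y in Set.Ioi (0 : ℝ), (C ^ h * (|h * Real.log lam| ^ j / (j.factorial : ℝ))) *
          (y ^ q * Real.exp (-(h + (j : ℝ)) * y ^ phi)) from
      MeasureTheory.setIntegral_congr_fun measurableSet_Ioi fun y hy => ?_]
    · rw [MeasureTheory.integral_const_mul,
        integral_rpow_mul_exp_neg_mul_rpow hphi hq (by positivity : (0 : ℝ) < h + (j : ℝ))]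
      rw [show -(q + 1) / phi = -s by rw [hsdef, hqdef, neg_div], show (q + 1) / phi = s by
        rw [hsdef, hqdef]]
      ring
    · have hy' : (0 : ℝ) < y := hy
      simp only [hFdef, Real.norm_eq_abs, abs_mul, abs_div, abs_pow,
        abs_of_nonneg (Real.rpow_nonneg hC.le h), abs_of_nonneg (Real.rpow_nonneg hy'.le q),
        abs_of_nonneg (Real.exp_pos _).le, Nat.abs_cast]
  -- summability of the norm sequence
  have hsum0 : Summable (fun j : ℕ =>
      |h * Real.log lam| ^ j / (j.factorial : ℝ) * (h + (j : ℝ)) ^ (-s)) := by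
    refine Summable.of_nonneg_of_le (fun j => by positivity) (fun j => ?_)
      ((Real.summable_pow_div_factorial |h * Real.log lam|).mul_right (h ^ (-s)))
    have h1 : (h + (j : ℝ)) ^ (-s) ≤ h ^ (-s) :=
      Real.rpow_le_rpow_of_nonpos hh (by linarith [Nat.cast_nonneg (α := ℝ) j]) (by linarith)
    exact mul_le_mul_of_nonneg_left h1 (by positivity)
  -- the three statements
  have hsum2 : Summable (fun j : ℕ =>
      (h * Real.log lam) ^ j / (j.factorial : ℝ) * (h + (j : ℝ)) ^ (-s)) := by
    refine Summable.of_norm ?_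
    refine hsum0.congr fun j => ?_
    have : (0 : ℝ) ≤ (h + (j : ℝ)) ^ (-s) := Real.rpow_nonneg (by positivity) _
    simp [Real.norm_eq_abs, abs_mul, abs_div, abs_pow, abs_of_nonneg this, Nat.abs_cast]
  have hint : IntegrableOn (fun y : ℝ => smptwPDF lam phi y ^ h) (Set.Ioi (0 : ℝ)) := by
    have hmaj : IntegrableOn (fun y : ℝ =>
        (C ^ h * Real.exp |h * Real.log lam|) * (y ^ q * Real.exp (-h * y ^ phi)))
        (Set.Ioi (0 : ℝ)) := (intKey hq hphi hh).const_mul _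
    have hcont : ContinuousOn (fun y : ℝ => smptwPDF lam phi y ^ h) (Set.Ioi (0 : ℝ)) := by
      refine ContinuousOn.rpow_const ?_ fun y _ => Or.inr hh.le
      have c1 : ContinuousOn (fun y : ℝ => y ^ (phi - 1)) (Set.Ioi 0) := fun y hy =>
        (Real.continuousAt_rpow_const y _ (Or.inl (ne_of_gt hy))).continuousWithinAt
      have c2 : ContinuousOn (fun y : ℝ => y ^ phi) (Set.Ioi 0) := fun y hy =>
        (Real.continuousAt_rpow_const y _ (Or.inl (ne_of_gt hy))).continuousWithinAt
      have c3 : ContinuousOn (fun y : ℝ =>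
          Real.exp (Real.log lam * Real.exp (-(y ^ phi)) - y ^ phi)) (Set.Ioi 0) :=
        Real.continuous_exp.comp_continuousOn
          ((continuousOn_const.mul
            (Real.continuous_exp.comp_continuousOn c2.neg)).sub c2)
      unfold smptwPDF
      exact ((continuousOn_const.mul c1).mul c3).div_const _
    refine Integrable.mono' hmaj (hcont.aestronglyMeasurable measurableSet_Ioi) ?_
    refine (MeasureTheory.ae_restrict_iff' measurableSet_Ioi).mpr (.of_forall fun y hy => ?_)
    have hy' : (0 : ℝ) < y := hy
    have hb : 0 ≤ smptwPDF lam phi y ^ h := Real.rpow_nonneg (hpdfpos y hy').le h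
    rw [Real.norm_eq_abs, abs_of_nonneg hb, e1 y hy']
    have hle : Real.exp ((h * Real.log lam) * Real.exp (-(y ^ phi))) ≤
        Real.exp |h * Real.log lam| := by
      refine Real.exp_le_exp.mpr ?_
      calc (h * Real.log lam) * Real.exp (-(y ^ phi))
          ≤ |(h * Real.log lam) * Real.exp (-(y ^ phi))| := le_abs_self _
        _ = |h * Real.log lam| * Real.exp (-(y ^ phi)) := by
            rw [abs_mul, abs_of_nonneg (Real.exp_pos _).le]
        _ ≤ |h * Real.log lam| * 1 := by
            refine mul_le_mul_of_nonneg_left ?_ (abs_nonneg _)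
            exact Real.exp_le_one_iff.mpr (neg_nonpos.mpr (Real.rpow_nonneg hy'.le _))
        _ = |h * Real.log lam| := mul_one _
    calc C ^ h * (y ^ q * Real.exp ((h * Real.log lam) * Real.exp (-(y ^ phi))) *
          Real.exp (-(h * y ^ phi)))
        ≤ C ^ h * (y ^ q * Real.exp |h * Real.log lam| * Real.exp (-(h * y ^ phi))) := by
          have := mul_le_mul_of_nonneg_left hle (Real.rpow_nonneg hy'.le q)
          have := mul_le_mul_of_nonneg_right this (Real.exp_pos (-(h * y ^ phi))).le
          exact mul_le_mul_of_nonneg_left this (Real.rpow_nonneg hC.le h)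
      _ = (C ^ h * Real.exp |h * Real.log lam|) * (y ^ q * Real.exp (-h * y ^ phi)) := by
          rw [show -h * y ^ phi = -(h * y ^ phi) by ring]; ring
  refine ⟨hint, hsum2, ?_⟩
  -- the integral formula
  have hnsum : Summable fun j : ℕ => ∫ y in Set.Ioi (0 : ℝ), ‖F j y‖ := by
    refine (hsum0.mul_left (C ^ h * (1 / phi) * Real.Gamma s)).congr fun j => ?_
    rw [hFnval j]
  calc ∫ y in Set.Ioi (0 : ℝ), smptwPDF lam phi y ^ h
      = ∫ y in Set.Ioi (0 : ℝ), ∑' j : ℕ, F j y :=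
        MeasureTheory.setIntegral_congr_fun measurableSet_Ioi hpt
    _ = ∑' j : ℕ, ∫ y in Set.Ioi (0 : ℝ), F j y :=
        (MeasureTheory.integral_tsum_of_summable_integral_norm hFint hnsum).symm
    _ = (C ^ h * (1 / phi) * Real.Gamma s) * ∑' j : ℕ,
          (h * Real.log lam) ^ j / (j.factorial : ℝ) * (h + (j : ℝ)) ^ (-s) := by
        rw [← tsum_mul_left]
        exact tsum_congr hFval
    _ = C ^ h * (1 / phi) * Real.Gamma s * ∑' j : ℕ,
          (h * Real.log lam) ^ j / (j.factorial : ℝ) * (h + (j : ℝ)) ^ (-s) := by ring
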